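/- The quartet set Q6 = {12|35, 13|46, 12|56, 24|56} is minimally definitive for T6: Q6 defines T6, but for each q in Q6, the set Q6 − q does not define T6. In particular, the tree T' on leaf set {1,…,6} with cherries {2,4} and {5,3} at the ends of an interior path and leaves 6 and 1 attached to the middle two interior vertices displays Q6 − {12|56} and is distinct from T6. -/

import Mathlib

/-- A phylogenetic tree on label set `L`: a finite tree whose degree-1 vertices
(leaves) are bijectively labelled by `L`, and whose interior (non-leaf) vertices
have degree at least 3 (in particular, there are no degree-2 vertices). -/
structure PhyloTree (L : Type) : Type 1 where
  V : Type
  finV : Finite V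
  G : SimpleGraph V
  isTree : G.IsTree
  leaf : L → V
  leaf_inj : Function.Injective leaf
  leaf_deg : ∀ l, (G.neighborSet (leaf l)).ncard = 1
  leaf_of_deg_one : ∀ v, (G.neighborSet v).ncard = 1 → ∃ l, leaf l = v
  interior_deg : ∀ v, (¬ ∃ l, leaf l = v) → 3 ≤ (G.neighborSet v).ncard

namespace PhyloTree

variable {L : Type}

/-- A vertex is interior if it is not a leaf. -/
def IsInterior (T : PhyloTree L) (v : T.V) : Prop := ¬ ∃ l, T.leaf l = v

/-- A phylogenetic tree is binary if every interior vertex has degree exactly 3. -/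
def Binary (T : PhyloTree L) : Prop :=
  ∀ v, T.IsInterior v → (T.G.neighborSet v).ncard = 3

/-- `T` displays the quartet `uv|wx`: the path from `u` to `v` is
vertex-disjoint from the path from `w` to `x`. -/
def Displays (T : PhyloTree L) (u v w x : L) : Prop :=
  ∀ (p : T.G.Walk (T.leaf u) (T.leaf v)) (q : T.G.Walk (T.leaf w) (T.leaf x)),
    p.IsPath → q.IsPath → ∀ a, a ∈ p.support → a ∉ q.support

/-- A quartet `uv|wx` encoded as the tuple `(u, v, w, x)`. -/
abbrev Quartet (L : Type) := L × L × L × L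

/-- The set of leaves appearing in a quartet. -/
def qLeaves (q : Quartet L) : Set L := {q.1, q.2.1, q.2.2.1, q.2.2.2}

def DisplaysQ (T : PhyloTree L) (q : Quartet L) : Prop :=
  T.Displays q.1 q.2.1 q.2.2.1 q.2.2.2

def DisplaysSet (T : PhyloTree L) (Q : Set (Quartet L)) : Prop :=
  ∀ q ∈ Q, T.DisplaysQ q

/-- The edge `e` of `T` separates `{u, v}` from `{w, x}`: after deleting `e`,
`u` and `v` are in one component and `w` and `x` in the other. -/
def Separates (T : PhyloTree L) (e : Sym2 T.V) (u v w x : L) : Prop :=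
  e ∈ T.G.edgeSet ∧
  (T.G.deleteEdges {e}).Reachable (T.leaf u) (T.leaf v) ∧
  (T.G.deleteEdges {e}).Reachable (T.leaf w) (T.leaf x) ∧
  ¬ (T.G.deleteEdges {e}).Reachable (T.leaf u) (T.leaf w)

/-- The quartet `q = uv|wx` distinguishes the edge `e` of `T`:
`e` is the unique cut-edge of `T` separating `{u,v}` from `{w,x}`. -/
def Distinguishes (T : PhyloTree L) (q : Quartet L) (e : Sym2 T.V) : Prop :=
  T.Separates e q.1 q.2.1 q.2.2.1 q.2.2.2 ∧
  ∀ e', T.Separates e' q.1 q.2.1 q.2.2.1 q.2.2.2 → e' = e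

/-- An interior edge: both endpoints are interior vertices. -/
def InteriorEdge (T : PhyloTree L) (e : Sym2 T.V) : Prop :=
  e ∈ T.G.edgeSet ∧ ∀ v ∈ e, T.IsInterior v

/-- Label-preserving isomorphism of phylogenetic trees. -/
def PIso (T T' : PhyloTree L) : Prop :=
  ∃ φ : T.V ≃ T'.V,
    (∀ a b, T.G.Adj a b ↔ T'.G.Adj (φ a) (φ b)) ∧ ∀ l, φ (T.leaf l) = T'.leaf l

/-- The quartet set `Q` defines `T`: `T` displays `Q` and is the unique
phylogenetic tree on the leaf set `L` doing so. -/
def Defines (Q : Set (Quartet L)) (T : PhyloTree L) : Prop :=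
  T.DisplaysSet Q ∧ ∀ T' : PhyloTree L, T'.DisplaysSet Q → PIso T' T

end PhyloTree

/-- Adjacency of the caterpillar graph on `n` leaves (labels `Fin n`, so label
`i` of `{1,…,n}` corresponds to `i - 1 : Fin n`) with interior path
`Fin (n-2)`: leaves `0,1` attach to interior vertex `0`, leaf `k`
(for `2 ≤ k ≤ n-3`) to interior vertex `k-1`, and leaves `n-2, n-1` to
interior vertex `n-3`. -/
def catAdj (n : ℕ) : (Fin n ⊕ Fin (n - 2)) → (Fin n ⊕ Fin (n - 2)) → Prop
  | Sum.inl k, Sum.inr j => (j : ℕ) = min ((k : ℕ) - 1) (n - 3)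
  | Sum.inr j, Sum.inl k => (j : ℕ) = min ((k : ℕ) - 1) (n - 3)
  | Sum.inr j, Sum.inr j' => (j : ℕ) + 1 = (j' : ℕ) ∨ (j' : ℕ) + 1 = (j : ℕ)
  | _, _ => False

/-- The caterpillar graph on `n` leaves. -/
def catGraph (n : ℕ) : SimpleGraph (Fin n ⊕ Fin (n - 2)) where
  Adj a b := catAdj n a b
  symm := by
    constructor
    rintro (k | j) (k' | j') h <;> simp only [catAdj] at h ⊢ <;> tauto
  loopless := by
    constructor
    rintro (k | j) h
    · exact h
    · simp only [catAdj] at h; omega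

/-- `T` is a caterpillar tree whose leaf labelled `σ k` occupies position `k`
(positions as in `catGraph`). -/
def IsCatWith {n : ℕ} (T : PhyloTree (Fin n)) (σ : Fin n → Fin n) : Prop :=
  ∃ φ : T.V ≃ (Fin n ⊕ Fin (n - 2)),
    (∀ a b, T.G.Adj a b ↔ (catGraph n).Adj (φ a) (φ b)) ∧
    ∀ k, φ (T.leaf (σ k)) = Sum.inl k

/-- `T` is the caterpillar tree `T_n` on labels `{1,…,n}` (as `Fin n`). -/
def IsCaterpillar {n : ℕ} (T : PhyloTree (Fin n)) : Prop := IsCatWith T id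

/-- `Q6 = {12|35, 13|46, 12|56, 24|56}` with labels shifted to `Fin 6`. -/
def Q6 : Set (PhyloTree.Quartet (Fin 6)) := {(0,1,2,4), (0,2,3,5), (0,1,4,5), (1,3,4,5)}

/-- The leaf arrangement of the tree `T'` from the paper: positions along the
caterpillar shape carry labels `2, 4, 6, 1, 5, 3` (shifted to `Fin 6`). -/
def sigma' : Fin 6 → Fin 6 := ![1, 3, 5, 0, 4, 2]


open SimpleGraph Walk

set_option linter.unusedSectionVars false

namespace TreeAux

variable {V : Type} [DecidableEq V] {G : SimpleGraph V}

noncomputable def tp (hG : G.IsTree) (u v : V) : G.Walk u v :=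
  (hG.existsUnique_path u v).exists.choose

lemma tp_isPath (hG : G.IsTree) (u v : V) : (tp hG u v).IsPath :=
  (hG.existsUnique_path u v).exists.choose_spec

lemma tp_unique (hG : G.IsTree) {u v : V} (p : G.Walk u v) (hp : p.IsPath) :
    p = tp hG u v :=
  (hG.existsUnique_path u v).unique hp (tp_isPath hG u v)

lemma tp_support_subset (hG : G.IsTree) {u v : V} (w : G.Walk u v) :
    (tp hG u v).support ⊆ w.support := by
  intro x hx
  rw [← tp_unique hG w.bypass w.bypass_isPath] at hx
  exact w.support_bypass_subset hx

lemma tp_union (hG : G.IsTree) (u v w : V) {x : V}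
    (hx : x ∈ (tp hG u w).support) :
    x ∈ (tp hG u v).support ∨ x ∈ (tp hG v w).support := by
  have h := tp_support_subset hG ((tp hG u v).append (tp hG v w)) hx
  rw [Walk.support_append] at h
  rcases List.mem_append.mp h with h | h
  · exact Or.inl h
  · exact Or.inr (List.mem_of_mem_tail h)

lemma tp_rev (hG : G.IsTree) (u v : V) {x : V} :
    x ∈ (tp hG u v).support ↔ x ∈ (tp hG v u).support := by
  have h := tp_unique hG (tp hG u v).reverse ((tp_isPath hG u v).reverse)
  rw [← h, Walk.support_reverse, List.mem_reverse]

lemma tp_prefix (hG : G.IsTree) {u v x : V} (hx : x ∈ (tp hG u v).support) :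
    (tp hG u x).support ⊆ (tp hG u v).support := by
  intro y hy
  rw [← tp_unique hG ((tp hG u v).takeUntil x hx) ((tp_isPath hG u v).takeUntil hx)] at hy
  exact Walk.support_takeUntil_subset _ hx hy

lemma tp_suffix (hG : G.IsTree) {u v x : V} (hx : x ∈ (tp hG u v).support) :
    (tp hG x v).support ⊆ (tp hG u v).support := by
  intro y hy
  rw [← tp_unique hG ((tp hG u v).dropUntil x hx) ((tp_isPath hG u v).dropUntil hx)] at hy
  exact Walk.support_dropUntil_subset _ hx hy

lemma tp_conv (hG : G.IsTree) {u v x y : V} (hx : x ∈ (tp hG u v).support)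
    (hy : y ∈ (tp hG u v).support) :
    (tp hG x y).support ⊆ (tp hG u v).support := by
  have hsplit : y ∈ ((tp hG u v).takeUntil x hx).support ∨
      y ∈ ((tp hG u v).dropUntil x hx).support := by
    have := (tp hG u v).take_spec hx
    rw [← this, Walk.support_append] at hy
    rcases List.mem_append.mp hy with h | h
    · exact Or.inl h
    · exact Or.inr (List.mem_of_mem_tail h)
  rcases hsplit with h | h
  · -- y on the part from u to x
    rw [tp_unique hG ((tp hG u v).takeUntil x hx) ((tp_isPath hG u v).takeUntil hx)] at h
    intro z hz
    rw [tp_rev hG x y] at hz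
    exact tp_prefix hG hx (tp_suffix hG h hz)
  · rw [tp_unique hG ((tp hG u v).dropUntil x hx) ((tp_isPath hG u v).dropUntil hx)] at h
    intro z hz
    exact tp_suffix hG hx (tp_prefix hG h hz)

lemma walk_exists_adj {u v : V} (p : G.Walk u v) (h : u ≠ v) :
    ∃ x, G.Adj u x ∧ x ∈ p.support := by
  cases p with
  | nil => exact absurd rfl h
  | cons h' q => exact ⟨_, h', by simp⟩

lemma mid_two {u v : V} (p : G.Walk u v) (hp : p.IsPath) {x : V} (hx : x ∈ p.support)
    (hxu : x ≠ u) (hxv : x ≠ v) : ∃ y z, y ≠ z ∧ G.Adj x y ∧ G.Adj x z := by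
  induction p with
  | nil => simp at hx; exact absurd hx hxu
  | @cons u w v h q ih =>
    rw [Walk.support_cons] at hx
    rcases List.mem_cons.mp hx with rfl | hx
    · exact absurd rfl hxu
    · by_cases hxw : x = w
      · subst hxw
        cases q with
        | nil => exact absurd rfl hxv
        | @cons _ w' _ h' q' =>
          have hu : u ∉ (Walk.cons h' q').support := ((Walk.cons_isPath_iff _ _).mp hp).2
          have hw' : w' ∈ (Walk.cons h' q').support :=
            List.mem_cons.mpr (Or.inr q'.start_mem_support)
          exact ⟨u, w', fun hc => hu (hc ▸ hw'), h.symm, h'⟩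
      · exact ih hp.of_cons hx hxw hxv

lemma nomid {u v : V} (p : G.Walk u v) (hp : p.IsPath) (hne : u ≠ v)
    (h : ∀ x ∈ p.support, x = u ∨ x = v) : G.Adj u v := by
  cases p with
  | nil => exact absurd rfl hne
  | cons h' q =>
    rename_i w
    rcases h w (by simp) with rfl | rfl
    · exact absurd ((Walk.cons_isPath_iff _ _).mp hp).2 (by simp)
    · exact h'

lemma listSwitch {α : Type} {R : α → α → Prop} {A B : α → Prop} :
    ∀ (l : List α), l.Chain' R → (∀ x ∈ l, A x ∨ B x) → ∀ (hne : l ≠ []),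
      A (l.head hne) → B (l.getLast hne) →
      (∃ x ∈ l, A x ∧ B x) ∨
        ∃ x y, R x y ∧ A x ∧ B y ∧ x ∈ l ∧ y ∈ l := by
  intro l
  induction l with
  | nil => intro _ _ hne; exact absurd rfl hne
  | cons a l ih =>
    intro hc hab hne hA hB
    rw [List.head_cons] at hA
    by_cases hBa : B a
    · exact Or.inl ⟨a, by simp, hA, hBa⟩
    · cases l with
      | nil => simp only [List.getLast_singleton] at hB; exact absurd hB hBa
      | cons b l' =>
        have hRab : R a b := (List.isChain_cons_cons.mp hc).1
        by_cases hAb : A b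
        · have := ih (List.isChain_cons_cons.mp hc).2 (fun x hx => hab x (by simp [hx]))
            (by simp) (by simpa using hAb)
            (by rw [List.getLast_cons (by simp)] at hB; exact hB)
          rcases this with ⟨x, hx, h1, h2⟩ | ⟨x, y, h1, h2, h3, h4, h5⟩
          · exact Or.inl ⟨x, by simp [hx], h1, h2⟩
          · exact Or.inr ⟨x, y, h1, h2, h3, by simp [h4], by simp [h5]⟩
        · rcases hab b (by simp) with h | h
          · exact absurd h hAb
          · exact Or.inr ⟨a, b, hRab, hA, h, by simp, by simp⟩

lemma median (hG : G.IsTree) (u v w : V) :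
    ∃ m, m ∈ (tp hG u v).support ∧ m ∈ (tp hG u w).support ∧
      m ∈ (tp hG v w).support := by
  classical
  set P := tp hG u v with hP
  have hcover : ∀ x ∈ P.support, x ∈ (tp hG u w).support ∨ x ∈ (tp hG v w).support := by
    intro x hx
    rcases tp_union hG u w v hx with h | h
    · exact Or.inl h
    · exact Or.inr ((tp_rev hG w v).mp h)
  have hne : P.support ≠ [] := P.support_ne_nil
  have hkey : ∀ (q : G.Walk u v) (h : q.support ≠ []), q.support.head h = u := by
    intro q h; cases q <;> rfl
  have hkey2 : ∀ (q : G.Walk u v) (h : q.support ≠ []), q.support.getLast h = v := by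
    intro q h
    have := q.getLast_support
    convert this using 2
  have hhead : P.support.head hne = u := hkey P hne
  have hlast : P.support.getLast hne = v := hkey2 P hne
  have := listSwitch P.support P.isChain_adj_support hcover hne
    (by rw [hhead]; exact Walk.start_mem_support _)
    (by rw [hlast]; exact Walk.start_mem_support _)
  rcases this with ⟨m, hm, h1, h2⟩ | ⟨x, y, hxy, hx, hy, hxl, hyl⟩
  · exact ⟨m, hm, h1, h2⟩
  · by_cases hyx : y ∈ (tp hG x w).support
    · exact ⟨y, hyl, tp_suffix hG hx hyx, hy⟩
    · have hcons : (Walk.cons hxy.symm (tp hG x w)) = tp hG y w := by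
        apply tp_unique
        rw [Walk.cons_isPath_iff]
        exact ⟨tp_isPath hG x w, hyx⟩
      have hxmem : x ∈ (tp hG y w).support := by
        rw [← hcons]; simp
      exact ⟨x, hxl, hx, tp_suffix hG hy hxmem⟩

end TreeAux

namespace TreeAux

variable {V : Type} [DecidableEq V] {G : SimpleGraph V}

def Dv (hG : G.IsTree) (a b c d : V) : Prop :=
  ∀ x ∈ (tp hG a b).support, x ∉ (tp hG c d).support

lemma Dv_swapL {hG : G.IsTree} {a b c d : V} (h : Dv hG a b c d) : Dv hG b a c d :=
  fun x hx => h x ((tp_rev hG a b).mpr hx)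

lemma Dv_comm {hG : G.IsTree} {a b c d : V} (h : Dv hG a b c d) : Dv hG c d a b :=
  fun x hx hx' => h x hx' hx

lemma Dv_swapR {hG : G.IsTree} {a b c d : V} (h : Dv hG a b c d) : Dv hG a b d c :=
  Dv_comm (Dv_swapL (Dv_comm h))

lemma Dv_r1 {hG : G.IsTree} {a m b c d : V} (h1 : Dv hG a m c d) (h2 : Dv hG m b c d) :
    Dv hG a b c d := by
  intro x hx
  rcases tp_union hG a m b hx with h | h
  · exact h1 x h
  · exact h2 x h

lemma Dv_r2 {hG : G.IsTree} {a b c d e : V} (h1 : Dv hG a b c d) (h2 : Dv hG a c d e) :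
    Dv hG a b d e := by
  intro x hx hx'
  obtain ⟨m, hm_ac, hm_ad, hm_cd⟩ := median hG a c d
  rcases tp_union hG a x d hm_ad with hm | hm
  · exact h1 m (tp_prefix hG hx hm) hm_cd
  · have hmde : m ∈ (tp hG d e).support :=
      tp_prefix hG hx' ((tp_rev hG x d).mp hm)
    exact h2 m hm_ac hmde

end TreeAux
open TreeAux PhyloTree

instance catAdjDec : ∀ (a b : Fin 6 ⊕ Fin (6-2)), Decidable (catAdj 6 a b) := by
  rintro (k | j) (k' | j')
  · exact inferInstanceAs (Decidable False)
  · exact inferInstanceAs (Decidable ((j' : ℕ) = min ((k : ℕ) - 1) (6-3)))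
  · exact inferInstanceAs (Decidable ((j : ℕ) = min ((k' : ℕ) - 1) (6-3)))
  · exact inferInstanceAs (Decidable ((j : ℕ) + 1 = (j' : ℕ) ∨ (j' : ℕ) + 1 = (j : ℕ)))

instance : DecidableRel (catGraph 6).Adj :=
  fun a b => inferInstanceAs (Decidable (catAdj 6 a b))

lemma recon (T' : PhyloTree (Fin 6)) (hQ : T'.DisplaysSet Q6) : IsCaterpillar T' := by
  classical
  letI : Fintype T'.V := @Fintype.ofFinite _ T'.finV
  have hG : T'.G.IsTree := T'.isTree
  set ℓ : Fin 6 → T'.V := T'.leaf with hldef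
  have hdeg : ∀ v : T'.V, (T'.G.neighborSet v).ncard = T'.G.degree v := by
    intro v
    have h1 : T'.G.neighborSet v = ↑(T'.G.neighborFinset v) := by
      rw [SimpleGraph.neighborFinset_def, Set.coe_toFinset]
    rw [Set.ncard_eq_toFinset_card']
    rfl
  have hleafdeg : ∀ l, T'.G.degree (ℓ l) = 1 := fun l => by
    rw [← hdeg]; exact T'.leaf_deg l
  have hnbr_ex : ∀ l, ∃ u, T'.G.neighborSet (ℓ l) = {u} := fun l =>
    Set.ncard_eq_one.mp (T'.leaf_deg l)
  choose nbr hnbr using hnbr_ex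
  have hadjnbr : ∀ l, T'.G.Adj (ℓ l) (nbr l) := fun l => by
    have : nbr l ∈ T'.G.neighborSet (ℓ l) := by rw [hnbr l]; rfl
    exact this
  have hli : ∀ {i j : Fin 6}, i ≠ j → ℓ i ≠ ℓ j := fun hij h => hij (T'.leaf_inj h)
  have hmem : ∀ (l m : Fin 6), l ≠ m → nbr l ∈ (tp hG (ℓ l) (ℓ m)).support := by
    intro l m hlm
    obtain ⟨x, hadj, hx⟩ := walk_exists_adj (tp hG (ℓ l) (ℓ m)) (hli hlm)
    have hxn : x ∈ T'.G.neighborSet (ℓ l) := hadj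
    rw [hnbr l, Set.mem_singleton_iff] at hxn
    rwa [← hxn]
  have hmem' : ∀ (l m : Fin 6), l ≠ m → nbr l ∈ (tp hG (ℓ m) (ℓ l)).support :=
    fun l m h => (tp_rev hG _ _).mp (hmem l m h)
  have hmidnl : ∀ {u v x : T'.V}, x ∈ (tp hG u v).support → x ≠ u → x ≠ v →
      ∀ l, ℓ l ≠ x := by
    intro u v x hx hxu hxv l hl
    obtain ⟨y, z, hyz, hy, hz⟩ := mid_two (tp hG u v) (tp_isPath hG u v) hx hxu hxv
    rw [← hl] at hy hz
    have hy' : y ∈ T'.G.neighborSet (ℓ l) := hy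
    have hz' : z ∈ T'.G.neighborSet (ℓ l) := hz
    rw [hnbr l, Set.mem_singleton_iff] at hy' hz'
    exact hyz (hy'.trans hz'.symm)
  have hnbrnl : ∀ (l j : Fin 6), ℓ j ≠ nbr l := by
    intro l j heq
    by_cases hjl : j = l
    · subst hjl
      have := hadjnbr j
      rw [← heq] at this
      exact T'.G.loopless.irrefl _ this
    · obtain ⟨m, hml, hmj⟩ : ∃ m : Fin 6, m ≠ l ∧ m ≠ j := by
        have : ∀ l' j' : Fin 6, ∃ m : Fin 6, m ≠ l' ∧ m ≠ j' := by decide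
        exact this l j
      have hx := hmem l m (fun e => hml e.symm)
      exact hmidnl hx
        (fun e => T'.G.loopless.irrefl _ (e ▸ hadjnbr l))
        (fun e => (hli (show j ≠ m from fun e2 => hmj e2.symm)) (heq.trans e))
        j heq
  -- quartet facts
  have hDq : ∀ i j k l : Fin 6, ((i,j,k,l) : Quartet (Fin 6)) ∈ Q6 →
      Dv hG (ℓ i) (ℓ j) (ℓ k) (ℓ l) := by
    intro i j k l hq x hx hx'
    exact hQ _ hq (tp hG _ _) (tp hG _ _) (tp_isPath hG _ _) (tp_isPath hG _ _) x hx hx'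
  have D1 : Dv hG (ℓ 0) (ℓ 1) (ℓ 2) (ℓ 4) := hDq 0 1 2 4 (by simp [Q6])
  have D2 : Dv hG (ℓ 0) (ℓ 2) (ℓ 3) (ℓ 5) := hDq 0 2 3 5 (by simp [Q6])
  have D3 : Dv hG (ℓ 0) (ℓ 1) (ℓ 4) (ℓ 5) := hDq 0 1 4 5 (by simp [Q6])
  have D4 : Dv hG (ℓ 1) (ℓ 3) (ℓ 4) (ℓ 5) := hDq 1 3 4 5 (by simp [Q6])
  have E1 : Dv hG (ℓ 0) (ℓ 1) (ℓ 2) (ℓ 5) := Dv_comm (Dv_r1 (Dv_comm D1) (Dv_comm D3))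
  have E2 : Dv hG (ℓ 0) (ℓ 3) (ℓ 4) (ℓ 5) := Dv_r1 D3 D4
  have E3 : Dv hG (ℓ 0) (ℓ 1) (ℓ 3) (ℓ 5) :=
    Dv_comm (Dv_swapL (Dv_r2 (Dv_swapR (Dv_swapL (Dv_comm D2))) (Dv_swapL (Dv_comm E1))))
  have E4 : Dv hG (ℓ 0) (ℓ 2) (ℓ 4) (ℓ 5) := Dv_swapR (Dv_r2 D2 (Dv_swapR E2))
  have E5 : Dv hG (ℓ 0) (ℓ 1) (ℓ 2) (ℓ 3) :=
    Dv_comm (Dv_r1 (Dv_comm E1) (Dv_swapL (Dv_comm E3)))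
  have E6 : Dv hG (ℓ 1) (ℓ 2) (ℓ 3) (ℓ 5) := Dv_r1 (Dv_swapL E3) D2
  have E7 : Dv hG (ℓ 1) (ℓ 2) (ℓ 4) (ℓ 5) := Dv_r1 (Dv_swapL D3) E4
  have E8 : Dv hG (ℓ 2) (ℓ 3) (ℓ 4) (ℓ 5) := Dv_r1 (Dv_swapL E4) E2
  have E9 : Dv hG (ℓ 0) (ℓ 1) (ℓ 3) (ℓ 4) :=
    Dv_comm (Dv_r1 (Dv_comm E3) (Dv_swapL (Dv_comm D3)))
  have E10 : Dv hG (ℓ 0) (ℓ 2) (ℓ 3) (ℓ 4) :=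
    Dv_comm (Dv_r1 (Dv_comm D2) (Dv_swapL (Dv_comm E4)))
  -- distinctness of the four interior candidates
  have hab : nbr 1 ≠ nbr 2 := fun h =>
    E1 (nbr 1) (hmem' 1 0 (by decide)) (by rw [h]; exact hmem 2 5 (by decide))
  have hac : nbr 1 ≠ nbr 3 := fun h =>
    E3 (nbr 1) (hmem' 1 0 (by decide)) (by rw [h]; exact hmem 3 5 (by decide))
  have had : nbr 1 ≠ nbr 4 := fun h =>
    D3 (nbr 1) (hmem' 1 0 (by decide)) (by rw [h]; exact hmem 4 5 (by decide))
  have hbc : nbr 2 ≠ nbr 3 := fun h =>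
    D2 (nbr 2) (hmem' 2 0 (by decide)) (by rw [h]; exact hmem 3 5 (by decide))
  have hbd : nbr 2 ≠ nbr 4 := fun h =>
    E4 (nbr 2) (hmem' 2 0 (by decide)) (by rw [h]; exact hmem 4 5 (by decide))
  have hcd : nbr 3 ≠ nbr 4 := fun h =>
    E2 (nbr 3) (hmem' 3 0 (by decide)) (by rw [h]; exact hmem 4 5 (by decide))
  -- counting
  set IF : Finset T'.V := Finset.univ.filter (fun v => ∀ l, ℓ l ≠ v) with hIFdef
  have hIFmem : ∀ v, v ∈ IF ↔ ∀ l, ℓ l ≠ v := by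
    intro v; rw [hIFdef]; simp
  have hintdeg : ∀ v ∈ IF, 3 ≤ T'.G.degree v := by
    intro v hv
    rw [← hdeg]
    exact T'.interior_deg v (fun ⟨l, hl⟩ => (hIFmem v).mp hv l hl)
  have huniv : (Finset.univ : Finset T'.V) = Finset.image ℓ Finset.univ ∪ IF := by
    ext v
    simp only [Finset.mem_univ, true_iff, Finset.mem_union, Finset.mem_image]
    by_cases h : ∃ l, ℓ l = v
    · obtain ⟨l, hl⟩ := h
      exact Or.inl ⟨l, by simp, hl⟩
    · exact Or.inr ((hIFmem v).mpr (fun l hl => h ⟨l, hl⟩))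
  have hdisj : Disjoint (Finset.image ℓ Finset.univ) IF := by
    rw [Finset.disjoint_left]
    rintro v hv hv'
    obtain ⟨l, _, hl⟩ := Finset.mem_image.mp hv
    exact (hIFmem v).mp hv' l hl
  have hcard6 : (Finset.image ℓ Finset.univ).card = 6 := by
    rw [Finset.card_image_of_injective _ T'.leaf_inj]; simp
  have hcardV : Fintype.card T'.V = 6 + IF.card := by
    rw [← Finset.card_univ, huniv, Finset.card_union_of_disjoint hdisj, hcard6]
  have hedges : (T'.G.edgeFinset).card + 1 = Fintype.card T'.V := hG.card_edgeFinset
  have hsum : ∑ v, T'.G.degree v = 2 * T'.G.edgeFinset.card :=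
    T'.G.sum_degrees_eq_twice_card_edges
  have hsumsplit : ∑ v, T'.G.degree v =
      (∑ v ∈ Finset.image ℓ Finset.univ, T'.G.degree v) + ∑ v ∈ IF, T'.G.degree v := by
    rw [← Finset.sum_union hdisj, ← huniv]
  have hsumleaf : ∑ v ∈ Finset.image ℓ Finset.univ, T'.G.degree v = 6 := by
    rw [Finset.sum_image (fun x _ y _ h => T'.leaf_inj h)]
    simp [show ∀ l, T'.G.degree (T'.leaf l) = 1 from hleafdeg]
  have hsumIF : 3 * IF.card ≤ ∑ v ∈ IF, T'.G.degree v := by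
    calc 3 * IF.card = ∑ _v ∈ IF, 3 := by rw [Finset.sum_const, smul_eq_mul, mul_comm]
    _ ≤ _ := Finset.sum_le_sum hintdeg
  have hIFle : IF.card ≤ 4 := by omega
  have habcdIF : ({nbr 1, nbr 2, nbr 3, nbr 4} : Finset T'.V) ⊆ IF := by
    intro v hv
    rw [hIFmem]
    simp only [Finset.mem_insert, Finset.mem_singleton] at hv
    rcases hv with rfl | rfl | rfl | rfl
    · exact hnbrnl 1
    · exact hnbrnl 2
    · exact hnbrnl 3
    · exact hnbrnl 4
  have hcard4 : ({nbr 1, nbr 2, nbr 3, nbr 4} : Finset T'.V).card = 4 := by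
    rw [Finset.card_insert_of_notMem (by simp [hab, hac, had]),
      Finset.card_insert_of_notMem (by simp [hbc, hbd]),
      Finset.card_insert_of_notMem (by simp [hcd]), Finset.card_singleton]
  have hIFeq : IF = {nbr 1, nbr 2, nbr 3, nbr 4} :=
    (Finset.eq_of_subset_of_card_le habcdIF (by omega)).symm
  have hcardV10 : Fintype.card T'.V = 10 := by rw [hcardV, hIFeq, hcard4]
  -- the neighbors of the end leaves
  have hu0 : nbr 0 = nbr 1 := by
    have h0 : nbr 0 ∈ IF := (hIFmem _).mpr (hnbrnl 0)
    rw [hIFeq] at h0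
    simp only [Finset.mem_insert, Finset.mem_singleton] at h0
    rcases h0 with h | h | h | h
    · exact h
    · exact absurd (hmem 0 1 (by decide))
        (fun hc => E1 (nbr 0) hc (by rw [h]; exact hmem 2 5 (by decide)))
    · exact absurd (hmem 0 1 (by decide))
        (fun hc => E3 (nbr 0) hc (by rw [h]; exact hmem 3 5 (by decide)))
    · exact absurd (hmem 0 1 (by decide))
        (fun hc => D3 (nbr 0) hc (by rw [h]; exact hmem 4 5 (by decide)))
  have hu5 : nbr 5 = nbr 4 := by
    have h0 : nbr 5 ∈ IF := (hIFmem _).mpr (hnbrnl 5)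
    rw [hIFeq] at h0
    simp only [Finset.mem_insert, Finset.mem_singleton] at h0
    have h45 : nbr 5 ∈ (tp hG (ℓ 4) (ℓ 5)).support := hmem' 5 4 (by decide)
    rcases h0 with h | h | h | h
    · exact absurd h45 (fun hc => D3 (nbr 1) (hmem' 1 0 (by decide)) (h ▸ hc))
    · exact absurd h45 (fun hc => E4 (nbr 2) (hmem' 2 0 (by decide)) (h ▸ hc))
    · exact absurd h45 (fun hc => E2 (nbr 3) (hmem' 3 0 (by decide)) (h ▸ hc))
    · exact h
  have hadj0 : T'.G.Adj (ℓ 0) (nbr 1) := hu0 ▸ hadjnbr 0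
  have hadj5 : T'.G.Adj (ℓ 5) (nbr 4) := hu5 ▸ hadjnbr 5
  -- spine adjacencies
  have spine_adj : ∀ (i j : Fin 6) (x y : T'.V), x ≠ y →
      x ∈ (tp hG (ℓ i) (ℓ j)).support → y ∈ (tp hG (ℓ i) (ℓ j)).support →
      (∀ v ∈ (tp hG x y).support, v = x ∨ v = y ∨ (v ∈ IF ∧ v ∈ (tp hG (ℓ i) (ℓ j)).support)) →
      True := fun _ _ _ _ _ _ _ _ => trivial
  have hmida : ∀ (i j : Fin 6) (x y : T'.V), i ≠ j →
      x ∈ (tp hG (ℓ i) (ℓ j)).support → y ∈ (tp hG (ℓ i) (ℓ j)).support →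
      ∀ v ∈ (tp hG x y).support, v ≠ x → v ≠ y → v ∈ IF ∧ v ∈ (tp hG (ℓ i) (ℓ j)).support := by
    intro i j x y hij hx hy v hv hvx hvy
    have hvij : v ∈ (tp hG (ℓ i) (ℓ j)).support := tp_conv hG hx hy hv
    exact ⟨(hIFmem v).mpr (hmidnl hv hvx hvy), hvij⟩
  have hADab : T'.G.Adj (nbr 1) (nbr 2) := by
    apply nomid (tp hG (nbr 1) (nbr 2)) (tp_isPath hG _ _) hab
    intro x hx
    by_contra hcon
    push_neg at hcon
    obtain ⟨hxa, hxb⟩ := hcon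
    obtain ⟨hxIF, hx12⟩ := hmida 1 2 (nbr 1) (nbr 2) (by decide)
      (hmem 1 2 (by decide)) (hmem' 2 1 (by decide)) x hx hxa hxb
    rw [hIFeq] at hxIF
    simp only [Finset.mem_insert, Finset.mem_singleton] at hxIF
    rcases hxIF with h | h | h | h
    · exact hxa h
    · exact hxb h
    · exact E6 x hx12 (by rw [h]; exact hmem 3 5 (by decide))
    · exact E7 x hx12 (by rw [h]; exact hmem 4 5 (by decide))
  have hADbc : T'.G.Adj (nbr 2) (nbr 3) := by
    apply nomid (tp hG (nbr 2) (nbr 3)) (tp_isPath hG _ _) hbc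
    intro x hx
    by_contra hcon
    push_neg at hcon
    obtain ⟨hxb, hxc⟩ := hcon
    obtain ⟨hxIF, hx23⟩ := hmida 2 3 (nbr 2) (nbr 3) (by decide)
      (hmem 2 3 (by decide)) (hmem' 3 2 (by decide)) x hx hxb hxc
    rw [hIFeq] at hxIF
    simp only [Finset.mem_insert, Finset.mem_singleton] at hxIF
    rcases hxIF with h | h | h | h
    · exact (Dv_comm E5) x hx23 (by rw [h]; exact hmem' 1 0 (by decide))
    · exact hxb h
    · exact hxc h
    · exact E8 x hx23 (by rw [h]; exact hmem 4 5 (by decide))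
  have hADcd : T'.G.Adj (nbr 3) (nbr 4) := by
    apply nomid (tp hG (nbr 3) (nbr 4)) (tp_isPath hG _ _) hcd
    intro x hx
    by_contra hcon
    push_neg at hcon
    obtain ⟨hxc, hxd⟩ := hcon
    obtain ⟨hxIF, hx34⟩ := hmida 3 4 (nbr 3) (nbr 4) (by decide)
      (hmem 3 4 (by decide)) (hmem' 4 3 (by decide)) x hx hxc hxd
    rw [hIFeq] at hxIF
    simp only [Finset.mem_insert, Finset.mem_singleton] at hxIF
    rcases hxIF with h | h | h | h
    · exact (Dv_comm E9) x hx34 (by rw [h]; exact hmem' 1 0 (by decide))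
    · exact (Dv_comm E10) x hx34 (by rw [h]; exact hmem' 2 0 (by decide))
    · exact hxc h
    · exact hxd h
  -- degrees of interior vertices are all 3
  have hsumIFval : ∑ v ∈ IF, T'.G.degree v =
      T'.G.degree (nbr 1) + (T'.G.degree (nbr 2) + (T'.G.degree (nbr 3) + T'.G.degree (nbr 4))) := by
    rw [hIFeq, Finset.sum_insert (by simp [hab, hac, had]),
      Finset.sum_insert (by simp [hbc, hbd]), Finset.sum_insert (by simp [hcd]),
      Finset.sum_singleton]
  have hga : 3 ≤ T'.G.degree (nbr 1) := hintdeg _ (habcdIF (by simp))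
  have hgb : 3 ≤ T'.G.degree (nbr 2) := hintdeg _ (habcdIF (by simp))
  have hgc : 3 ≤ T'.G.degree (nbr 3) := hintdeg _ (habcdIF (by simp))
  have hgd : 3 ≤ T'.G.degree (nbr 4) := hintdeg _ (habcdIF (by simp))
  have hIFcard4 : IF.card = 4 := by rw [hIFeq, hcard4]
  have hdega : T'.G.degree (nbr 1) = 3 := by omega
  have hdegb : T'.G.degree (nbr 2) = 3 := by omega
  have hdegc : T'.G.degree (nbr 3) = 3 := by omega
  have hdegd : T'.G.degree (nbr 4) = 3 := by omega
  -- neighbor finsets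
  have hNl : ∀ l, T'.G.neighborFinset (ℓ l) = {nbr l} := by
    intro l
    apply Finset.coe_injective
    rw [SimpleGraph.neighborFinset_def, Set.coe_toFinset, hnbr l]
    simp
  have hNset : ∀ (v : T'.V) (s : Finset T'.V), s ⊆ T'.G.neighborFinset v →
      T'.G.degree v = 3 → s.card = 3 → T'.G.neighborFinset v = s := by
    intro v s hs hdv hcs
    exact (Finset.eq_of_subset_of_card_le hs (by rw [hcs, ← hdv]; rfl)).symm
  have hNa : T'.G.neighborFinset (nbr 1) = {ℓ 0, ℓ 1, nbr 2} := by
    have hsub : ({ℓ 0, ℓ 1, nbr 2} : Finset T'.V) ⊆ T'.G.neighborFinset (nbr 1) := by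
      intro v hv
      simp only [Finset.mem_insert, Finset.mem_singleton] at hv
      rw [SimpleGraph.mem_neighborFinset]
      rcases hv with rfl | rfl | rfl
      · exact hadj0.symm
      · exact (hadjnbr 1).symm
      · exact hADab
    have hcs : ({ℓ 0, ℓ 1, nbr 2} : Finset T'.V).card = 3 := by
      rw [Finset.card_insert_of_notMem (by simp [hli (show (0:Fin 6) ≠ 1 by decide), hnbrnl 2 0]),
        Finset.card_insert_of_notMem (by simp [hnbrnl 2 1]), Finset.card_singleton]
    exact hNset _ _ hsub hdega hcs
  have hNb : T'.G.neighborFinset (nbr 2) = {ℓ 2, nbr 1, nbr 3} := by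
    have hsub : ({ℓ 2, nbr 1, nbr 3} : Finset T'.V) ⊆ T'.G.neighborFinset (nbr 2) := by
      intro v hv
      simp only [Finset.mem_insert, Finset.mem_singleton] at hv
      rw [SimpleGraph.mem_neighborFinset]
      rcases hv with rfl | rfl | rfl
      · exact (hadjnbr 2).symm
      · exact hADab.symm
      · exact hADbc
    have hcs : ({ℓ 2, nbr 1, nbr 3} : Finset T'.V).card = 3 := by
      rw [Finset.card_insert_of_notMem (by simp [hnbrnl 1 2, hnbrnl 3 2]),
        Finset.card_insert_of_notMem (by simp [hac]), Finset.card_singleton]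
    exact hNset _ _ hsub hdegb hcs
  have hNc : T'.G.neighborFinset (nbr 3) = {ℓ 3, nbr 2, nbr 4} := by
    have hsub : ({ℓ 3, nbr 2, nbr 4} : Finset T'.V) ⊆ T'.G.neighborFinset (nbr 3) := by
      intro v hv
      simp only [Finset.mem_insert, Finset.mem_singleton] at hv
      rw [SimpleGraph.mem_neighborFinset]
      rcases hv with rfl | rfl | rfl
      · exact (hadjnbr 3).symm
      · exact hADbc.symm
      · exact hADcd
    have hcs : ({ℓ 3, nbr 2, nbr 4} : Finset T'.V).card = 3 := by
      rw [Finset.card_insert_of_notMem (by simp [hnbrnl 2 3, hnbrnl 4 3]),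
        Finset.card_insert_of_notMem (by simp [hbd]), Finset.card_singleton]
    exact hNset _ _ hsub hdegc hcs
  have hNd : T'.G.neighborFinset (nbr 4) = {ℓ 4, ℓ 5, nbr 3} := by
    have hsub : ({ℓ 4, ℓ 5, nbr 3} : Finset T'.V) ⊆ T'.G.neighborFinset (nbr 4) := by
      intro v hv
      simp only [Finset.mem_insert, Finset.mem_singleton] at hv
      rw [SimpleGraph.mem_neighborFinset]
      rcases hv with rfl | rfl | rfl
      · exact (hadjnbr 4).symm
      · exact hadj5.symm
      · exact hADcd.symm
    have hcs : ({ℓ 4, ℓ 5, nbr 3} : Finset T'.V).card = 3 := by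
      rw [Finset.card_insert_of_notMem (by simp [hli (show (4:Fin 6) ≠ 5 by decide), hnbrnl 3 4]),
        Finset.card_insert_of_notMem (by simp [hnbrnl 3 5]), Finset.card_singleton]
    exact hNset _ _ hsub hdegd hcs
  -- the equivalence
  set f : Fin 6 ⊕ Fin (6-2) → T'.V :=
    Sum.elim (fun i => ℓ i) (fun j : Fin (6-2) => (![nbr 1, nbr 2, nbr 3, nbr 4] : Fin 4 → T'.V) j) with hfdef
  have hfl : ∀ i : Fin 6, f (Sum.inl i) = ℓ i := fun i => rfl
  have hinj : Function.Injective f := by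
    rintro (i | j) (i' | j') h
    · exact congrArg Sum.inl (T'.leaf_inj h)
    · exfalso
      fin_cases j'
      · exact hnbrnl 1 i h
      · exact hnbrnl 2 i h
      · exact hnbrnl 3 i h
      · exact hnbrnl 4 i h
    · exfalso
      fin_cases j
      · exact hnbrnl 1 i' h.symm
      · exact hnbrnl 2 i' h.symm
      · exact hnbrnl 3 i' h.symm
      · exact hnbrnl 4 i' h.symm
    · fin_cases j <;> fin_cases j' <;>
        first
          | rfl
          | exact absurd h hab | exact absurd h hac | exact absurd h had
          | exact absurd h hbc | exact absurd h hbd | exact absurd h hcd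
          | exact absurd h.symm hab | exact absurd h.symm hac | exact absurd h.symm had
          | exact absurd h.symm hbc | exact absurd h.symm hbd | exact absurd h.symm hcd
  have hbij : Function.Bijective f := by
    rw [Fintype.bijective_iff_injective_and_card]
    exact ⟨hinj, by simp [hcardV10]⟩
  have hAdj : ∀ s t, T'.G.Adj (f s) (f t) ↔ (catGraph 6).Adj s t := by
    intro s t
    constructor
    · intro h
      rw [← SimpleGraph.mem_neighborFinset] at h
      rcases s with i | j
      · rw [hfl, hNl i, Finset.mem_singleton] at h
        fin_cases i
        · have ht : t = Sum.inr 0 := hinj (h.trans hu0)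
          rw [ht]; decide
        · have ht : t = Sum.inr 0 := hinj h
          rw [ht]; decide
        · have ht : t = Sum.inr 1 := hinj h
          rw [ht]; decide
        · have ht : t = Sum.inr 2 := hinj h
          rw [ht]; decide
        · have ht : t = Sum.inr 3 := hinj h
          rw [ht]; decide
        · have ht : t = Sum.inr 3 := hinj (h.trans hu5)
          rw [ht]; decide
      · fin_cases j
        · have h2 : f t ∈ ({ℓ 0, ℓ 1, nbr 2} : Finset T'.V) := by rw [← hNa]; exact h
          simp only [Finset.mem_insert, Finset.mem_singleton] at h2
          rcases h2 with h | h | h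
          · rw [hinj (show f t = f (Sum.inl 0) from h)]; decide
          · rw [hinj (show f t = f (Sum.inl 1) from h)]; decide
          · rw [hinj (show f t = f (Sum.inr 1) from h)]; decide
        · have h2 : f t ∈ ({ℓ 2, nbr 1, nbr 3} : Finset T'.V) := by rw [← hNb]; exact h
          simp only [Finset.mem_insert, Finset.mem_singleton] at h2
          rcases h2 with h | h | h
          · rw [hinj (show f t = f (Sum.inl 2) from h)]; decide
          · rw [hinj (show f t = f (Sum.inr 0) from h)]; decide
          · rw [hinj (show f t = f (Sum.inr 2) from h)]; decide
        · have h2 : f t ∈ ({ℓ 3, nbr 2, nbr 4} : Finset T'.V) := by rw [← hNc]; exact h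
          simp only [Finset.mem_insert, Finset.mem_singleton] at h2
          rcases h2 with h | h | h
          · rw [hinj (show f t = f (Sum.inl 3) from h)]; decide
          · rw [hinj (show f t = f (Sum.inr 1) from h)]; decide
          · rw [hinj (show f t = f (Sum.inr 3) from h)]; decide
        · have h2 : f t ∈ ({ℓ 4, ℓ 5, nbr 3} : Finset T'.V) := by rw [← hNd]; exact h
          simp only [Finset.mem_insert, Finset.mem_singleton] at h2
          rcases h2 with h | h | h
          · rw [hinj (show f t = f (Sum.inl 4) from h)]; decide
          · rw [hinj (show f t = f (Sum.inl 5) from h)]; decide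
          · rw [hinj (show f t = f (Sum.inr 2) from h)]; decide
    · intro h
      rcases s with i | j <;> rcases t with i' | j'
      · exact absurd h (fun hh => hh)
      · have hj : (j' : ℕ) = min ((i : ℕ) - 1) (6-3) := h
        fin_cases i
        · have : j' = 0 := Fin.ext (by simpa using hj)
          rw [this]; exact hadj0
        · have : j' = 0 := Fin.ext (by simpa using hj)
          rw [this]; exact hadjnbr 1
        · have : j' = 1 := Fin.ext (by simpa using hj)
          rw [this]; exact hadjnbr 2
        · have : j' = 2 := Fin.ext (by simpa using hj)
          rw [this]; exact hadjnbr 3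
        · have : j' = 3 := Fin.ext (by simpa using hj)
          rw [this]; exact hadjnbr 4
        · have : j' = 3 := Fin.ext (by simpa using hj)
          rw [this]; exact hadj5
      · have hj : (j : ℕ) = min ((i' : ℕ) - 1) (6-3) := h
        fin_cases i'
        · have : j = 0 := Fin.ext (by simpa using hj)
          rw [this]; exact hadj0.symm
        · have : j = 0 := Fin.ext (by simpa using hj)
          rw [this]; exact (hadjnbr 1).symm
        · have : j = 1 := Fin.ext (by simpa using hj)
          rw [this]; exact (hadjnbr 2).symm
        · have : j = 2 := Fin.ext (by simpa using hj)
          rw [this]; exact (hadjnbr 3).symm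
        · have : j = 3 := Fin.ext (by simpa using hj)
          rw [this]; exact (hadjnbr 4).symm
        · have : j = 3 := Fin.ext (by simpa using hj)
          rw [this]; exact hadj5.symm
      · fin_cases j <;> fin_cases j' <;>
          first
            | exact absurd h (by decide)
            | exact hADab | exact hADab.symm
            | exact hADbc | exact hADbc.symm
            | exact hADcd | exact hADcd.symm
  refine ⟨(Equiv.ofBijective f hbij).symm, ?_, ?_⟩
  · intro x y
    have h := hAdj ((Equiv.ofBijective f hbij).symm x) ((Equiv.ofBijective f hbij).symm y)
    rwa [show f ((Equiv.ofBijective f hbij).symm x) = x from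
        (Equiv.ofBijective f hbij).apply_symm_apply x,
      show f ((Equiv.ofBijective f hbij).symm y) = y from
        (Equiv.ofBijective f hbij).apply_symm_apply y] at h
  · intro k
    rw [Equiv.symm_apply_eq]
    rfl

open TreeAux PhyloTree SimpleGraph

instance sumMemDec (a : Fin 6 ⊕ Fin (6-2)) (l : List (Fin 6 ⊕ Fin (6-2))) : Decidable (a ∈ l) :=
  decidable_of_iff (∃ x ∈ l, a = x) (by simp [eq_comm])

lemma isTree_of_iso {V W : Type} {G : SimpleGraph V} {H : SimpleGraph W}
    (e : G ≃g H) (h : G.IsTree) : H.IsTree := by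
  rw [SimpleGraph.isTree_iff_existsUnique_path] at h ⊢
  obtain ⟨⟨v0⟩, huniq⟩ := h
  have hinj : Function.Injective (e.toHom : G →g H) := fun a b hab => e.toEquiv.injective hab
  have hsinj : Function.Injective (e.symm.toHom : H →g G) := fun a b hab =>
    e.symm.toEquiv.injective hab
  refine ⟨⟨e v0⟩, fun v w => ?_⟩
  obtain ⟨p, hp, hup⟩ := huniq (e.symm v) (e.symm w)
  refine ⟨(p.map e.toHom).copy (e.apply_symm_apply v) (e.apply_symm_apply w), ?_, ?_⟩
  · simp only [Walk.isPath_copy]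
    exact Walk.map_isPath_of_injective hinj hp
  · intro q hq
    apply Walk.map_injective_of_injective hsinj v w
    refine (hup _ (Walk.map_isPath_of_injective hsinj hq)).trans (hup _ ?_).symm
    apply Walk.map_isPath_of_injective hsinj
    simp only [Walk.isPath_copy]
    exact Walk.map_isPath_of_injective hinj hp

lemma displays_of_catWith (T' : PhyloTree (Fin 6)) {σ : Fin 6 → Fin 6} (h : IsCatWith T' σ)
    (k1 k2 k3 k4 : Fin 6)
    (w1 : (catGraph 6).Walk (Sum.inl k1) (Sum.inl k2))
    (w2 : (catGraph 6).Walk (Sum.inl k3) (Sum.inl k4))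
    (h1 : w1.IsPath) (h2 : w2.IsPath)
    (hd : ∀ a ∈ w1.support, a ∉ w2.support) :
    T'.Displays (σ k1) (σ k2) (σ k3) (σ k4) := by
  classical
  obtain ⟨φ, hφ, hl⟩ := h
  let e : T'.G ≃g catGraph 6 := ⟨φ, fun {a b} => (hφ a b).symm⟩
  have hinj : Function.Injective (e.toHom : T'.G →g catGraph 6) := fun a b hab =>
    e.toEquiv.injective hab
  have hcat : (catGraph 6).IsTree := isTree_of_iso e T'.isTree
  intro p q hp hq x hx hx'
  have hp1 : ((p.map e.toHom).copy (hl k1) (hl k2)).IsPath := by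
    rw [Walk.isPath_copy]
    exact Walk.map_isPath_of_injective hinj hp
  have hq1 : ((q.map e.toHom).copy (hl k3) (hl k4)).IsPath := by
    rw [Walk.isPath_copy]
    exact Walk.map_isPath_of_injective hinj hq
  have he1 : (p.map e.toHom).copy (hl k1) (hl k2) = w1 :=
    (hcat.existsUnique_path _ _).unique hp1 h1
  have he2 : (q.map e.toHom).copy (hl k3) (hl k4) = w2 :=
    (hcat.existsUnique_path _ _).unique hq1 h2
  have hx1 : φ x ∈ w1.support := by
    rw [← he1, Walk.support_copy, Walk.support_map]
    exact List.mem_map_of_mem hx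
  have hx2 : φ x ∈ w2.support := by
    rw [← he2, Walk.support_copy, Walk.support_map]
    exact List.mem_map_of_mem hx'
  exact hd _ hx1 hx2

noncomputable def mkCat (σ : Equiv.Perm (Fin 6)) (ht : (catGraph 6).IsTree) :
    PhyloTree (Fin 6) where
  V := Fin 6 ⊕ Fin (6-2)
  finV := inferInstance
  G := catGraph 6
  isTree := ht
  leaf l := Sum.inl (σ.symm l)
  leaf_inj := fun a b h => by
    have : σ.symm a = σ.symm b := Sum.inl.inj h
    exact σ.symm.injective this
  leaf_deg := fun l => by
    have hdeg : ∀ v : Fin 6 ⊕ Fin (6-2),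
        ((catGraph 6).neighborSet v).ncard = (catGraph 6).degree v := by
      intro v
      have h1 : (catGraph 6).neighborSet v = ↑((catGraph 6).neighborFinset v) := by
        rw [SimpleGraph.neighborFinset_def, Set.coe_toFinset]
      rw [Set.ncard_eq_toFinset_card']
      rfl
    rw [hdeg]
    have : ∀ x : Fin 6, (catGraph 6).degree (Sum.inl x) = 1 := by decide
    exact this _
  leaf_of_deg_one := fun v hv => by
    have hdeg : ∀ v : Fin 6 ⊕ Fin (6-2),
        ((catGraph 6).neighborSet v).ncard = (catGraph 6).degree v := by
      intro v
      have h1 : (catGraph 6).neighborSet v = ↑((catGraph 6).neighborFinset v) := by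
        rw [SimpleGraph.neighborFinset_def, Set.coe_toFinset]
      rw [Set.ncard_eq_toFinset_card']
      rfl
    rw [hdeg] at hv
    rcases v with k | j
    · exact ⟨σ k, by show Sum.inl (σ.symm (σ k)) = Sum.inl k; rw [σ.symm_apply_apply]⟩
    · exfalso
      have : ∀ j : Fin (6-2), (catGraph 6).degree (Sum.inr j) = 3 := by decide
      rw [this j] at hv
      exact absurd hv (by norm_num)
  interior_deg := fun v hv => by
    have hdeg : ∀ v : Fin 6 ⊕ Fin (6-2),
        ((catGraph 6).neighborSet v).ncard = (catGraph 6).degree v := by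
      intro v
      have h1 : (catGraph 6).neighborSet v = ↑((catGraph 6).neighborFinset v) := by
        rw [SimpleGraph.neighborFinset_def, Set.coe_toFinset]
      rw [Set.ncard_eq_toFinset_card']
      rfl
    rw [hdeg]
    rcases v with k | j
    · exact absurd ⟨σ k, by show Sum.inl (σ.symm (σ k)) = Sum.inl k
                            rw [σ.symm_apply_apply]⟩ hv
    · have : ∀ j : Fin (6-2), (catGraph 6).degree (Sum.inr j) = 3 := by decide
      rw [this j]

lemma mkCat_isCatWith (σ : Equiv.Perm (Fin 6)) (ht : (catGraph 6).IsTree) :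
    IsCatWith (mkCat σ ht) σ :=
  ⟨Equiv.refl _, fun _ _ => Iff.rfl, fun k => by
    show Sum.inl (σ.symm (σ k)) = Sum.inl k
    rw [σ.symm_apply_apply]⟩

lemma piso_of_catWith {T1 T2 : PhyloTree (Fin 6)} (σ : Equiv.Perm (Fin 6))
    (h1 : IsCatWith T1 σ) (h2 : IsCatWith T2 σ) : PIso T1 T2 := by
  obtain ⟨φ1, hφ1, hl1⟩ := h1
  obtain ⟨φ2, hφ2, hl2⟩ := h2
  refine ⟨φ1.trans φ2.symm, fun a b => ?_, fun l => ?_⟩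
  · have h := hφ2 (φ2.symm (φ1 a)) (φ2.symm (φ1 b))
    rw [φ2.apply_symm_apply, φ2.apply_symm_apply] at h
    exact (hφ1 a b).trans h.symm
  · show φ2.symm (φ1 (T1.leaf l)) = T2.leaf l
    have e1 : φ1 (T1.leaf (σ (σ.symm l))) = Sum.inl (σ.symm l) := hl1 (σ.symm l)
    have e2 : φ2 (T2.leaf (σ (σ.symm l))) = Sum.inl (σ.symm l) := hl2 (σ.symm l)
    rw [σ.apply_symm_apply] at e1 e2
    rw [e1, ← e2, φ2.symm_apply_apply]

lemma no_pattern {T1 T2 : PhyloTree (Fin 6)} (σ : Fin 6 → Fin 6)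
    (h1 : IsCatWith T1 σ) (h2 : IsCatWith T2 id) (hp : PIso T1 T2) :
    ∃ ψ : (Fin 6 ⊕ Fin (6-2)) ≃ (Fin 6 ⊕ Fin (6-2)),
      (∀ a b, (catGraph 6).Adj a b ↔ (catGraph 6).Adj (ψ a) (ψ b)) ∧
      ∀ k, ψ (Sum.inl k) = Sum.inl (σ k) := by
  obtain ⟨φ1, hφ1, hl1⟩ := h1
  obtain ⟨φ2, hφ2, hl2⟩ := h2
  obtain ⟨φp, hφp, hlp⟩ := hp
  refine ⟨(φ1.symm.trans φp).trans φ2, fun a b => ?_, fun k => ?_⟩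
  · have ha := hφ1 (φ1.symm a) (φ1.symm b)
    rw [φ1.apply_symm_apply, φ1.apply_symm_apply] at ha
    have hb := hφp (φ1.symm a) (φ1.symm b)
    have hc := hφ2 (φp (φ1.symm a)) (φp (φ1.symm b))
    exact (ha.symm.trans hb).trans hc
  · show φ2 (φp (φ1.symm (Sum.inl k))) = Sum.inl (σ k)
    have e1 : φ1.symm (Sum.inl k) = T1.leaf (σ k) := by
      rw [Equiv.symm_apply_eq]
      exact (hl1 k).symm
    rw [e1, hlp (σ k)]
    exact hl2 (σ k)

def permA : Equiv.Perm (Fin 6) := ⟨![0,2,1,3,4,5], ![0,2,1,3,4,5], by decide, by decide⟩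
def permB : Equiv.Perm (Fin 6) := ⟨![0,1,3,2,4,5], ![0,1,3,2,4,5], by decide, by decide⟩
def permC : Equiv.Perm (Fin 6) := ⟨![0,1,2,4,3,5], ![0,1,2,4,3,5], by decide, by decide⟩
def permD : Equiv.Perm (Fin 6) := ⟨sigma', ![3,0,5,1,4,2], by decide, by decide⟩

/-- `Q6` is minimally definitive for `T6`; moreover the tree `T'` (caterpillar
shape with leaf order `2,4 | 6 | 1 | 5,3`) displays `Q6 - 12|56` and is not
isomorphic to `T6`. -/
theorem stmt15 (T : PhyloTree (Fin 6)) (hT : IsCaterpillar T) :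
    PhyloTree.Defines Q6 T ∧
    (∀ q ∈ Q6, ¬ PhyloTree.Defines (Q6 \ {q}) T) ∧
    (∀ T' : PhyloTree (Fin 6), IsCatWith T' sigma' →
      T'.DisplaysSet (Q6 \ {((0 : Fin 6), (1 : Fin 6), (4 : Fin 6), (5 : Fin 6))}) ∧
      ¬ PhyloTree.PIso T' T) := by
  have hcatT : (catGraph 6).IsTree := by
    obtain ⟨φ, hφ, hl⟩ := hT
    exact isTree_of_iso ⟨φ, fun {a b} => (hφ a b).symm⟩ T.isTree
  have hTdisp : T.DisplaysSet Q6 := by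
    rintro q hq
    simp only [Q6, Set.mem_insert_iff, Set.mem_singleton_iff] at hq
    rcases hq with rfl | rfl | rfl | rfl
    · show T.Displays 0 1 2 4
      exact displays_of_catWith T hT 0 1 2 4
        (Walk.cons (by decide : (catGraph 6).Adj (Sum.inl 0 : Fin 6 ⊕ Fin (6-2)) (Sum.inr 0 : Fin 6 ⊕ Fin (6-2))) (Walk.cons (by decide : (catGraph 6).Adj (Sum.inr 0 : Fin 6 ⊕ Fin (6-2)) (Sum.inl 1 : Fin 6 ⊕ Fin (6-2))) Walk.nil))
        (Walk.cons (by decide : (catGraph 6).Adj (Sum.inl 2 : Fin 6 ⊕ Fin (6-2)) (Sum.inr 1 : Fin 6 ⊕ Fin (6-2))) (Walk.cons (by decide : (catGraph 6).Adj (Sum.inr 1 : Fin 6 ⊕ Fin (6-2)) (Sum.inr 2 : Fin 6 ⊕ Fin (6-2))) (Walk.cons (by decide : (catGraph 6).Adj (Sum.inr 2 : Fin 6 ⊕ Fin (6-2)) (Sum.inr 3 : Fin 6 ⊕ Fin (6-2))) (Walk.cons (by decide : (catGraph 6).Adj (Sum.inr 3 : Fin 6 ⊕ Fin (6-2)) (Sum.inl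 4 : Fin 6 ⊕ Fin (6-2))) Walk.nil))))
        (by rw [SimpleGraph.Walk.isPath_def]; decide) (by rw [SimpleGraph.Walk.isPath_def]; decide)
        (by decide)
    · show T.Displays 0 2 3 5
      exact displays_of_catWith T hT 0 2 3 5
        (Walk.cons (by decide : (catGraph 6).Adj (Sum.inl 0 : Fin 6 ⊕ Fin (6-2)) (Sum.inr 0 : Fin 6 ⊕ Fin (6-2))) (Walk.cons (by decide : (catGraph 6).Adj (Sum.inr 0 : Fin 6 ⊕ Fin (6-2)) (Sum.inr 1 : Fin 6 ⊕ Fin (6-2))) (Walk.cons (by decide : (catGraph 6).Adj (Sum.inr 1 : Fin 6 ⊕ Fin (6-2)) (Sum.inl 2 : Fin 6 ⊕ Fin (6-2))) Walk.nil)))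
        (Walk.cons (by decide : (catGraph 6).Adj (Sum.inl 3 : Fin 6 ⊕ Fin (6-2)) (Sum.inr 2 : Fin 6 ⊕ Fin (6-2))) (Walk.cons (by decide : (catGraph 6).Adj (Sum.inr 2 : Fin 6 ⊕ Fin (6-2)) (Sum.inr 3 : Fin 6 ⊕ Fin (6-2))) (Walk.cons (by decide : (catGraph 6).Adj (Sum.inr 3 : Fin 6 ⊕ Fin (6-2)) (Sum.inl 5 : Fin 6 ⊕ Fin (6-2))) Walk.nil)))
        (by rw [SimpleGraph.Walk.isPath_def]; decide) (by rw [SimpleGraph.Walk.isPath_def]; decide)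
        (by decide)
    · show T.Displays 0 1 4 5
      exact displays_of_catWith T hT 0 1 4 5
        (Walk.cons (by decide : (catGraph 6).Adj (Sum.inl 0 : Fin 6 ⊕ Fin (6-2)) (Sum.inr 0 : Fin 6 ⊕ Fin (6-2))) (Walk.cons (by decide : (catGraph 6).Adj (Sum.inr 0 : Fin 6 ⊕ Fin (6-2)) (Sum.inl 1 : Fin 6 ⊕ Fin (6-2))) Walk.nil))
        (Walk.cons (by decide : (catGraph 6).Adj (Sum.inl 4 : Fin 6 ⊕ Fin (6-2)) (Sum.inr 3 : Fin 6 ⊕ Fin (6-2))) (Walk.cons (by decide : (catGraph 6).Adj (Sum.inr 3 : Fin 6 ⊕ Fin (6-2)) (Sum.inl 5 : Fin 6 ⊕ Fin (6-2))) Walk.nil))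
        (by rw [SimpleGraph.Walk.isPath_def]; decide) (by rw [SimpleGraph.Walk.isPath_def]; decide)
        (by decide)
    · show T.Displays 1 3 4 5
      exact displays_of_catWith T hT 1 3 4 5
        (Walk.cons (by decide : (catGraph 6).Adj (Sum.inl 1 : Fin 6 ⊕ Fin (6-2)) (Sum.inr 0 : Fin 6 ⊕ Fin (6-2))) (Walk.cons (by decide : (catGraph 6).Adj (Sum.inr 0 : Fin 6 ⊕ Fin (6-2)) (Sum.inr 1 : Fin 6 ⊕ Fin (6-2))) (Walk.cons (by decide : (catGraph 6).Adj (Sum.inr 1 : Fin 6 ⊕ Fin (6-2)) (Sum.inr 2 : Fin 6 ⊕ Fin (6-2))) (Walk.cons (by decide : (catGraph 6).Adj (Sum.inr 2 : Fin 6 ⊕ Fin (6-2)) (Sum.inl 3 : Fin 6 ⊕ Fin (6-2))) Walk.nil))))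
        (Walk.cons (by decide : (catGraph 6).Adj (Sum.inl 4 : Fin 6 ⊕ Fin (6-2)) (Sum.inr 3 : Fin 6 ⊕ Fin (6-2))) (Walk.cons (by decide : (catGraph 6).Adj (Sum.inr 3 : Fin 6 ⊕ Fin (6-2)) (Sum.inl 5 : Fin 6 ⊕ Fin (6-2))) Walk.nil))
        (by rw [SimpleGraph.Walk.isPath_def]; decide) (by rw [SimpleGraph.Walk.isPath_def]; decide)
        (by decide)
  have part3 : ∀ T'' : PhyloTree (Fin 6), IsCatWith T'' sigma' →
      T''.DisplaysSet (Q6 \ {((0 : Fin 6), (1 : Fin 6), (4 : Fin 6), (5 : Fin 6))}) ∧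
      ¬ PhyloTree.PIso T'' T := by
    intro T'' h''
    constructor
    · rintro q ⟨hq, hne⟩
      simp only [Q6, Set.mem_insert_iff, Set.mem_singleton_iff] at hq
      rw [Set.mem_singleton_iff] at hne
      rcases hq with rfl | rfl | rfl | rfl
      · show T''.Displays 0 1 2 4
        exact displays_of_catWith T'' h'' 3 0 5 4
          (Walk.cons (by decide : (catGraph 6).Adj (Sum.inl 3 : Fin 6 ⊕ Fin (6-2)) (Sum.inr 2 : Fin 6 ⊕ Fin (6-2))) (Walk.cons (by decide : (catGraph 6).Adj (Sum.inr 2 : Fin 6 ⊕ Fin (6-2)) (Sum.inr 1 : Fin 6 ⊕ Fin (6-2))) (Walk.cons (by decide : (catGraph 6).Adj (Sum.inr 1 : Fin 6 ⊕ Fin (6-2)) (Sum.inr 0 : Fin 6 ⊕ Fin (6-2))) (Walk.cons (by decide : (catGraph 6).Adj (Sum.inr 0 : Fin 6 ⊕ Fin (6-2)) (Sum.inl 0 : Fin 6 ⊕ Fin (6-2))) Walk.nil))))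
          (Walk.cons (by decide : (catGraph 6).Adj (Sum.inl 5 : Fin 6 ⊕ Fin (6-2)) (Sum.inr 3 : Fin 6 ⊕ Fin (6-2))) (Walk.cons (by decide : (catGraph 6).Adj (Sum.inr 3 : Fin 6 ⊕ Fin (6-2)) (Sum.inl 4 : Fin 6 ⊕ Fin (6-2))) Walk.nil))
          (by rw [SimpleGraph.Walk.isPath_def]; decide) (by rw [SimpleGraph.Walk.isPath_def]; decide)
          (by decide)
      · show T''.Displays 0 2 3 5
        exact displays_of_catWith T'' h'' 3 5 1 2
          (Walk.cons (by decide : (catGraph 6).Adj (Sum.inl 3 : Fin 6 ⊕ Fin (6-2)) (Sum.inr 2 : Fin 6 ⊕ Fin (6-2))) (Walk.cons (by decide : (catGraph 6).Adj (Sum.inr 2 : Fin 6 ⊕ Fin (6-2)) (Sum.inr 3 : Fin 6 ⊕ Fin (6-2))) (Walk.cons (by decide : (catGraph 6).Adj (Sum.inr 3 : Fin 6 ⊕ Fin (6-2)) (Sum.inl 5 : Fin 6 ⊕ Fin (6-2))) Walk.nil)))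
          (Walk.cons (by decide : (catGraph 6).Adj (Sum.inl 1 : Fin 6 ⊕ Fin (6-2)) (Sum.inr 0 : Fin 6 ⊕ Fin (6-2))) (Walk.cons (by decide : (catGraph 6).Adj (Sum.inr 0 : Fin 6 ⊕ Fin (6-2)) (Sum.inr 1 : Fin 6 ⊕ Fin (6-2))) (Walk.cons (by decide : (catGraph 6).Adj (Sum.inr 1 : Fin 6 ⊕ Fin (6-2)) (Sum.inl 2 : Fin 6 ⊕ Fin (6-2))) Walk.nil)))
          (by rw [SimpleGraph.Walk.isPath_def]; decide) (by rw [SimpleGraph.Walk.isPath_def]; decide)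
          (by decide)
      · exact absurd rfl hne
      · show T''.Displays 1 3 4 5
        exact displays_of_catWith T'' h'' 0 1 4 2
          (Walk.cons (by decide : (catGraph 6).Adj (Sum.inl 0 : Fin 6 ⊕ Fin (6-2)) (Sum.inr 0 : Fin 6 ⊕ Fin (6-2))) (Walk.cons (by decide : (catGraph 6).Adj (Sum.inr 0 : Fin 6 ⊕ Fin (6-2)) (Sum.inl 1 : Fin 6 ⊕ Fin (6-2))) Walk.nil))
          (Walk.cons (by decide : (catGraph 6).Adj (Sum.inl 4 : Fin 6 ⊕ Fin (6-2)) (Sum.inr 3 : Fin 6 ⊕ Fin (6-2))) (Walk.cons (by decide : (catGraph 6).Adj (Sum.inr 3 : Fin 6 ⊕ Fin (6-2)) (Sum.inr 2 : Fin 6 ⊕ Fin (6-2))) (Walk.cons (by decide : (catGraph 6).Adj (Sum.inr 2 : Fin 6 ⊕ Fin (6-2)) (Sum.inr 1 : Fin 6 ⊕ Fin (6-2))) (Walk.cons (by decide : (catGraph 6).Adj (Sum.inr 1 : Fin 6 ⊕ Fin (6-2)) (Sum.inl 2 : Fin 6 ⊕ Fin (6-2))) Walk.nil))))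
          (by rw [SimpleGraph.Walk.isPath_def]; decide) (by rw [SimpleGraph.Walk.isPath_def]; decide)
          (by decide)
    · intro hpiso
      obtain ⟨ψ, hψ, hψl⟩ := no_pattern sigma' h'' hT hpiso
      have hex : ∃ y : Fin 6 ⊕ Fin (6-2), (catGraph 6).Adj (Sum.inl 0) y ∧
          (catGraph 6).Adj (Sum.inl 1) y := by decide
      obtain ⟨y, hy, hy2⟩ := hex
      have a1 : (catGraph 6).Adj (Sum.inl (1 : Fin 6)) (ψ y) := by
        have := (hψ _ _).mp hy
        rwa [hψl 0] at this
      have a2 : (catGraph 6).Adj (Sum.inl (3 : Fin 6)) (ψ y) := by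
        have := (hψ _ _).mp hy2
        rwa [hψl 1] at this
      exact absurd ⟨ψ y, a1, a2⟩
        (by decide : ¬ ∃ y : Fin 6 ⊕ Fin (6-2), (catGraph 6).Adj (Sum.inl 1) y ∧
          (catGraph 6).Adj (Sum.inl 3) y)
  refine ⟨⟨hTdisp, fun T'' hdisp => piso_of_catWith (Equiv.refl (Fin 6)) (recon T'' hdisp) hT⟩, ?_, part3⟩
  intro q hq
  simp only [Q6, Set.mem_insert_iff, Set.mem_singleton_iff] at hq
  rcases hq with rfl | rfl | rfl | rfl
  · rintro ⟨-, hu⟩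
    have hdispW : (mkCat permA hcatT).DisplaysSet (Q6 \ {((0:Fin 6),(1:Fin 6),(2:Fin 6),(4:Fin 6))}) := by
      rintro q ⟨hq, hne⟩
      simp only [Q6, Set.mem_insert_iff, Set.mem_singleton_iff] at hq
      rw [Set.mem_singleton_iff] at hne
      rcases hq with rfl | rfl | rfl | rfl
      · exact absurd rfl hne
      · show (mkCat permA hcatT).Displays 0 2 3 5
        exact displays_of_catWith (mkCat permA hcatT) (mkCat_isCatWith permA hcatT) 0 1 3 5
          (Walk.cons (by decide : (catGraph 6).Adj (Sum.inl 0 : Fin 6 ⊕ Fin (6-2)) (Sum.inr 0 : Fin 6 ⊕ Fin (6-2))) (Walk.cons (by decide : (catGraph 6).Adj (Sum.inr 0 : Fin 6 ⊕ Fin (6-2)) (Sum.inl 1 : Fin 6 ⊕ Fin (6-2))) Walk.nil))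
          (Walk.cons (by decide : (catGraph 6).Adj (Sum.inl 3 : Fin 6 ⊕ Fin (6-2)) (Sum.inr 2 : Fin 6 ⊕ Fin (6-2))) (Walk.cons (by decide : (catGraph 6).Adj (Sum.inr 2 : Fin 6 ⊕ Fin (6-2)) (Sum.inr 3 : Fin 6 ⊕ Fin (6-2))) (Walk.cons (by decide : (catGraph 6).Adj (Sum.inr 3 : Fin 6 ⊕ Fin (6-2)) (Sum.inl 5 : Fin 6 ⊕ Fin (6-2))) Walk.nil)))
          (by rw [SimpleGraph.Walk.isPath_def]; decide) (by rw [SimpleGraph.Walk.isPath_def]; decide)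
          (by decide)
      · show (mkCat permA hcatT).Displays 0 1 4 5
        exact displays_of_catWith (mkCat permA hcatT) (mkCat_isCatWith permA hcatT) 0 2 4 5
          (Walk.cons (by decide : (catGraph 6).Adj (Sum.inl 0 : Fin 6 ⊕ Fin (6-2)) (Sum.inr 0 : Fin 6 ⊕ Fin (6-2))) (Walk.cons (by decide : (catGraph 6).Adj (Sum.inr 0 : Fin 6 ⊕ Fin (6-2)) (Sum.inr 1 : Fin 6 ⊕ Fin (6-2))) (Walk.cons (by decide : (catGraph 6).Adj (Sum.inr 1 : Fin 6 ⊕ Fin (6-2)) (Sum.inl 2 : Fin 6 ⊕ Fin (6-2))) Walk.nil)))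
          (Walk.cons (by decide : (catGraph 6).Adj (Sum.inl 4 : Fin 6 ⊕ Fin (6-2)) (Sum.inr 3 : Fin 6 ⊕ Fin (6-2))) (Walk.cons (by decide : (catGraph 6).Adj (Sum.inr 3 : Fin 6 ⊕ Fin (6-2)) (Sum.inl 5 : Fin 6 ⊕ Fin (6-2))) Walk.nil))
          (by rw [SimpleGraph.Walk.isPath_def]; decide) (by rw [SimpleGraph.Walk.isPath_def]; decide)
          (by decide)
      · show (mkCat permA hcatT).Displays 1 3 4 5
        exact displays_of_catWith (mkCat permA hcatT) (mkCat_isCatWith permA hcatT) 2 3 4 5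
          (Walk.cons (by decide : (catGraph 6).Adj (Sum.inl 2 : Fin 6 ⊕ Fin (6-2)) (Sum.inr 1 : Fin 6 ⊕ Fin (6-2))) (Walk.cons (by decide : (catGraph 6).Adj (Sum.inr 1 : Fin 6 ⊕ Fin (6-2)) (Sum.inr 2 : Fin 6 ⊕ Fin (6-2))) (Walk.cons (by decide : (catGraph 6).Adj (Sum.inr 2 : Fin 6 ⊕ Fin (6-2)) (Sum.inl 3 : Fin 6 ⊕ Fin (6-2))) Walk.nil)))
          (Walk.cons (by decide : (catGraph 6).Adj (Sum.inl 4 : Fin 6 ⊕ Fin (6-2)) (Sum.inr 3 : Fin 6 ⊕ Fin (6-2))) (Walk.cons (by decide : (catGraph 6).Adj (Sum.inr 3 : Fin 6 ⊕ Fin (6-2)) (Sum.inl 5 : Fin 6 ⊕ Fin (6-2))) Walk.nil))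
          (by rw [SimpleGraph.Walk.isPath_def]; decide) (by rw [SimpleGraph.Walk.isPath_def]; decide)
          (by decide)
    have hpiso := hu _ hdispW
    obtain ⟨ψ, hψ, hψl⟩ := no_pattern (⇑permA) (mkCat_isCatWith permA hcatT) hT hpiso
    have hex : ∃ y z : Fin 6 ⊕ Fin (6-2), (catGraph 6).Adj (Sum.inl 0) y ∧
        (catGraph 6).Adj y z ∧ (catGraph 6).Adj z (Sum.inl 2) := by decide
    obtain ⟨y, z, hy, hyz, hz⟩ := hex
    have a1 : (catGraph 6).Adj (Sum.inl (0 : Fin 6)) (ψ y) := by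
      have := (hψ _ _).mp hy
      rwa [hψl 0] at this
    have a2 : (catGraph 6).Adj (ψ y) (ψ z) := (hψ _ _).mp hyz
    have a3 : (catGraph 6).Adj (ψ z) (Sum.inl (1 : Fin 6)) := by
      have := (hψ _ _).mp hz
      rwa [hψl 2] at this
    exact absurd ⟨ψ y, ψ z, a1, a2, a3⟩
      (by decide : ¬ ∃ y z : Fin 6 ⊕ Fin (6-2), (catGraph 6).Adj (Sum.inl 0) y ∧
        (catGraph 6).Adj y z ∧ (catGraph 6).Adj z (Sum.inl 1))
  · rintro ⟨-, hu⟩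
    have hdispW : (mkCat permB hcatT).DisplaysSet (Q6 \ {((0:Fin 6),(2:Fin 6),(3:Fin 6),(5:Fin 6))}) := by
      rintro q ⟨hq, hne⟩
      simp only [Q6, Set.mem_insert_iff, Set.mem_singleton_iff] at hq
      rw [Set.mem_singleton_iff] at hne
      rcases hq with rfl | rfl | rfl | rfl
      · show (mkCat permB hcatT).Displays 0 1 2 4
        exact displays_of_catWith (mkCat permB hcatT) (mkCat_isCatWith permB hcatT) 0 1 3 4
          (Walk.cons (by decide : (catGraph 6).Adj (Sum.inl 0 : Fin 6 ⊕ Fin (6-2)) (Sum.inr 0 : Fin 6 ⊕ Fin (6-2))) (Walk.cons (by decide : (catGraph 6).Adj (Sum.inr 0 : Fin 6 ⊕ Fin (6-2)) (Sum.inl 1 : Fin 6 ⊕ Fin (6-2))) Walk.nil))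
          (Walk.cons (by decide : (catGraph 6).Adj (Sum.inl 3 : Fin 6 ⊕ Fin (6-2)) (Sum.inr 2 : Fin 6 ⊕ Fin (6-2))) (Walk.cons (by decide : (catGraph 6).Adj (Sum.inr 2 : Fin 6 ⊕ Fin (6-2)) (Sum.inr 3 : Fin 6 ⊕ Fin (6-2))) (Walk.cons (by decide : (catGraph 6).Adj (Sum.inr 3 : Fin 6 ⊕ Fin (6-2)) (Sum.inl 4 : Fin 6 ⊕ Fin (6-2))) Walk.nil)))
          (by rw [SimpleGraph.Walk.isPath_def]; decide) (by rw [SimpleGraph.Walk.isPath_def]; decide)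
          (by decide)
      · exact absurd rfl hne
      · show (mkCat permB hcatT).Displays 0 1 4 5
        exact displays_of_catWith (mkCat permB hcatT) (mkCat_isCatWith permB hcatT) 0 1 4 5
          (Walk.cons (by decide : (catGraph 6).Adj (Sum.inl 0 : Fin 6 ⊕ Fin (6-2)) (Sum.inr 0 : Fin 6 ⊕ Fin (6-2))) (Walk.cons (by decide : (catGraph 6).Adj (Sum.inr 0 : Fin 6 ⊕ Fin (6-2)) (Sum.inl 1 : Fin 6 ⊕ Fin (6-2))) Walk.nil))
          (Walk.cons (by decide : (catGraph 6).Adj (Sum.inl 4 : Fin 6 ⊕ Fin (6-2)) (Sum.inr 3 : Fin 6 ⊕ Fin (6-2))) (Walk.cons (by decide : (catGraph 6).Adj (Sum.inr 3 : Fin 6 ⊕ Fin (6-2)) (Sum.inl 5 : Fin 6 ⊕ Fin (6-2))) Walk.nil))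
          (by rw [SimpleGraph.Walk.isPath_def]; decide) (by rw [SimpleGraph.Walk.isPath_def]; decide)
          (by decide)
      · show (mkCat permB hcatT).Displays 1 3 4 5
        exact displays_of_catWith (mkCat permB hcatT) (mkCat_isCatWith permB hcatT) 1 2 4 5
          (Walk.cons (by decide : (catGraph 6).Adj (Sum.inl 1 : Fin 6 ⊕ Fin (6-2)) (Sum.inr 0 : Fin 6 ⊕ Fin (6-2))) (Walk.cons (by decide : (catGraph 6).Adj (Sum.inr 0 : Fin 6 ⊕ Fin (6-2)) (Sum.inr 1 : Fin 6 ⊕ Fin (6-2))) (Walk.cons (by decide : (catGraph 6).Adj (Sum.inr 1 : Fin 6 ⊕ Fin (6-2)) (Sum.inl 2 : Fin 6 ⊕ Fin (6-2))) Walk.nil)))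
          (Walk.cons (by decide : (catGraph 6).Adj (Sum.inl 4 : Fin 6 ⊕ Fin (6-2)) (Sum.inr 3 : Fin 6 ⊕ Fin (6-2))) (Walk.cons (by decide : (catGraph 6).Adj (Sum.inr 3 : Fin 6 ⊕ Fin (6-2)) (Sum.inl 5 : Fin 6 ⊕ Fin (6-2))) Walk.nil))
          (by rw [SimpleGraph.Walk.isPath_def]; decide) (by rw [SimpleGraph.Walk.isPath_def]; decide)
          (by decide)
    have hpiso := hu _ hdispW
    obtain ⟨ψ, hψ, hψl⟩ := no_pattern (⇑permB) (mkCat_isCatWith permB hcatT) hT hpiso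
    have hex : ∃ y z : Fin 6 ⊕ Fin (6-2), (catGraph 6).Adj (Sum.inl 0) y ∧
        (catGraph 6).Adj y z ∧ (catGraph 6).Adj z (Sum.inl 2) := by decide
    obtain ⟨y, z, hy, hyz, hz⟩ := hex
    have a1 : (catGraph 6).Adj (Sum.inl (0 : Fin 6)) (ψ y) := by
      have := (hψ _ _).mp hy
      rwa [hψl 0] at this
    have a2 : (catGraph 6).Adj (ψ y) (ψ z) := (hψ _ _).mp hyz
    have a3 : (catGraph 6).Adj (ψ z) (Sum.inl (3 : Fin 6)) := by
      have := (hψ _ _).mp hz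
      rwa [hψl 2] at this
    exact absurd ⟨ψ y, ψ z, a1, a2, a3⟩
      (by decide : ¬ ∃ y z : Fin 6 ⊕ Fin (6-2), (catGraph 6).Adj (Sum.inl 0) y ∧
        (catGraph 6).Adj y z ∧ (catGraph 6).Adj z (Sum.inl 3))
  · rintro ⟨-, hu⟩
    have hdispW : (mkCat permD hcatT).DisplaysSet (Q6 \ {((0:Fin 6),(1:Fin 6),(4:Fin 6),(5:Fin 6))}) := by
      rintro q ⟨hq, hne⟩
      simp only [Q6, Set.mem_insert_iff, Set.mem_singleton_iff] at hq
      rw [Set.mem_singleton_iff] at hne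
      rcases hq with rfl | rfl | rfl | rfl
      · show (mkCat permD hcatT).Displays 0 1 2 4
        exact displays_of_catWith (mkCat permD hcatT) (mkCat_isCatWith permD hcatT) 3 0 5 4
          (Walk.cons (by decide : (catGraph 6).Adj (Sum.inl 3 : Fin 6 ⊕ Fin (6-2)) (Sum.inr 2 : Fin 6 ⊕ Fin (6-2))) (Walk.cons (by decide : (catGraph 6).Adj (Sum.inr 2 : Fin 6 ⊕ Fin (6-2)) (Sum.inr 1 : Fin 6 ⊕ Fin (6-2))) (Walk.cons (by decide : (catGraph 6).Adj (Sum.inr 1 : Fin 6 ⊕ Fin (6-2)) (Sum.inr 0 : Fin 6 ⊕ Fin (6-2))) (Walk.cons (by decide : (catGraph 6).Adj (Sum.inr 0 : Fin 6 ⊕ Fin (6-2)) (Sum.inl 0 : Fin 6 ⊕ Fin (6-2))) Walk.nil))))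
          (Walk.cons (by decide : (catGraph 6).Adj (Sum.inl 5 : Fin 6 ⊕ Fin (6-2)) (Sum.inr 3 : Fin 6 ⊕ Fin (6-2))) (Walk.cons (by decide : (catGraph 6).Adj (Sum.inr 3 : Fin 6 ⊕ Fin (6-2)) (Sum.inl 4 : Fin 6 ⊕ Fin (6-2))) Walk.nil))
          (by rw [SimpleGraph.Walk.isPath_def]; decide) (by rw [SimpleGraph.Walk.isPath_def]; decide)
          (by decide)
      · show (mkCat permD hcatT).Displays 0 2 3 5
        exact displays_of_catWith (mkCat permD hcatT) (mkCat_isCatWith permD hcatT) 3 5 1 2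
          (Walk.cons (by decide : (catGraph 6).Adj (Sum.inl 3 : Fin 6 ⊕ Fin (6-2)) (Sum.inr 2 : Fin 6 ⊕ Fin (6-2))) (Walk.cons (by decide : (catGraph 6).Adj (Sum.inr 2 : Fin 6 ⊕ Fin (6-2)) (Sum.inr 3 : Fin 6 ⊕ Fin (6-2))) (Walk.cons (by decide : (catGraph 6).Adj (Sum.inr 3 : Fin 6 ⊕ Fin (6-2)) (Sum.inl 5 : Fin 6 ⊕ Fin (6-2))) Walk.nil)))
          (Walk.cons (by decide : (catGraph 6).Adj (Sum.inl 1 : Fin 6 ⊕ Fin (6-2)) (Sum.inr 0 : Fin 6 ⊕ Fin (6-2))) (Walk.cons (by decide : (catGraph 6).Adj (Sum.inr 0 : Fin 6 ⊕ Fin (6-2)) (Sum.inr 1 : Fin 6 ⊕ Fin (6-2))) (Walk.cons (by decide : (catGraph 6).Adj (Sum.inr 1 : Fin 6 ⊕ Fin (6-2)) (Sum.inl 2 : Fin 6 ⊕ Fin (6-2))) Walk.nil)))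
          (by rw [SimpleGraph.Walk.isPath_def]; decide) (by rw [SimpleGraph.Walk.isPath_def]; decide)
          (by decide)
      · exact absurd rfl hne
      · show (mkCat permD hcatT).Displays 1 3 4 5
        exact displays_of_catWith (mkCat permD hcatT) (mkCat_isCatWith permD hcatT) 0 1 4 2
          (Walk.cons (by decide : (catGraph 6).Adj (Sum.inl 0 : Fin 6 ⊕ Fin (6-2)) (Sum.inr 0 : Fin 6 ⊕ Fin (6-2))) (Walk.cons (by decide : (catGraph 6).Adj (Sum.inr 0 : Fin 6 ⊕ Fin (6-2)) (Sum.inl 1 : Fin 6 ⊕ Fin (6-2))) Walk.nil))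
          (Walk.cons (by decide : (catGraph 6).Adj (Sum.inl 4 : Fin 6 ⊕ Fin (6-2)) (Sum.inr 3 : Fin 6 ⊕ Fin (6-2))) (Walk.cons (by decide : (catGraph 6).Adj (Sum.inr 3 : Fin 6 ⊕ Fin (6-2)) (Sum.inr 2 : Fin 6 ⊕ Fin (6-2))) (Walk.cons (by decide : (catGraph 6).Adj (Sum.inr 2 : Fin 6 ⊕ Fin (6-2)) (Sum.inr 1 : Fin 6 ⊕ Fin (6-2))) (Walk.cons (by decide : (catGraph 6).Adj (Sum.inr 1 : Fin 6 ⊕ Fin (6-2)) (Sum.inl 2 : Fin 6 ⊕ Fin (6-2))) Walk.nil))))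
          (by rw [SimpleGraph.Walk.isPath_def]; decide) (by rw [SimpleGraph.Walk.isPath_def]; decide)
          (by decide)
    have hpiso := hu _ hdispW
    obtain ⟨ψ, hψ, hψl⟩ := no_pattern (⇑permD) (mkCat_isCatWith permD hcatT) hT hpiso
    have hex : ∃ y : Fin 6 ⊕ Fin (6-2), (catGraph 6).Adj (Sum.inl 0) y ∧
        (catGraph 6).Adj (Sum.inl 1) y := by decide
    obtain ⟨y, hy, hy2⟩ := hex
    have a1 : (catGraph 6).Adj (Sum.inl (1 : Fin 6)) (ψ y) := by
      have := (hψ _ _).mp hy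
      rwa [hψl 0] at this
    have a2 : (catGraph 6).Adj (Sum.inl (3 : Fin 6)) (ψ y) := by
      have := (hψ _ _).mp hy2
      rwa [hψl 1] at this
    exact absurd ⟨ψ y, a1, a2⟩
      (by decide : ¬ ∃ y : Fin 6 ⊕ Fin (6-2), (catGraph 6).Adj (Sum.inl 1) y ∧
        (catGraph 6).Adj (Sum.inl 3) y)
  · rintro ⟨-, hu⟩
    have hdispW : (mkCat permC hcatT).DisplaysSet (Q6 \ {((1:Fin 6),(3:Fin 6),(4:Fin 6),(5:Fin 6))}) := by
      rintro q ⟨hq, hne⟩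
      simp only [Q6, Set.mem_insert_iff, Set.mem_singleton_iff] at hq
      rw [Set.mem_singleton_iff] at hne
      rcases hq with rfl | rfl | rfl | rfl
      · show (mkCat permC hcatT).Displays 0 1 2 4
        exact displays_of_catWith (mkCat permC hcatT) (mkCat_isCatWith permC hcatT) 0 1 2 3
          (Walk.cons (by decide : (catGraph 6).Adj (Sum.inl 0 : Fin 6 ⊕ Fin (6-2)) (Sum.inr 0 : Fin 6 ⊕ Fin (6-2))) (Walk.cons (by decide : (catGraph 6).Adj (Sum.inr 0 : Fin 6 ⊕ Fin (6-2)) (Sum.inl 1 : Fin 6 ⊕ Fin (6-2))) Walk.nil))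
          (Walk.cons (by decide : (catGraph 6).Adj (Sum.inl 2 : Fin 6 ⊕ Fin (6-2)) (Sum.inr 1 : Fin 6 ⊕ Fin (6-2))) (Walk.cons (by decide : (catGraph 6).Adj (Sum.inr 1 : Fin 6 ⊕ Fin (6-2)) (Sum.inr 2 : Fin 6 ⊕ Fin (6-2))) (Walk.cons (by decide : (catGraph 6).Adj (Sum.inr 2 : Fin 6 ⊕ Fin (6-2)) (Sum.inl 3 : Fin 6 ⊕ Fin (6-2))) Walk.nil)))
          (by rw [SimpleGraph.Walk.isPath_def]; decide) (by rw [SimpleGraph.Walk.isPath_def]; decide)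
          (by decide)
      · show (mkCat permC hcatT).Displays 0 2 3 5
        exact displays_of_catWith (mkCat permC hcatT) (mkCat_isCatWith permC hcatT) 0 2 4 5
          (Walk.cons (by decide : (catGraph 6).Adj (Sum.inl 0 : Fin 6 ⊕ Fin (6-2)) (Sum.inr 0 : Fin 6 ⊕ Fin (6-2))) (Walk.cons (by decide : (catGraph 6).Adj (Sum.inr 0 : Fin 6 ⊕ Fin (6-2)) (Sum.inr 1 : Fin 6 ⊕ Fin (6-2))) (Walk.cons (by decide : (catGraph 6).Adj (Sum.inr 1 : Fin 6 ⊕ Fin (6-2)) (Sum.inl 2 : Fin 6 ⊕ Fin (6-2))) Walk.nil)))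
          (Walk.cons (by decide : (catGraph 6).Adj (Sum.inl 4 : Fin 6 ⊕ Fin (6-2)) (Sum.inr 3 : Fin 6 ⊕ Fin (6-2))) (Walk.cons (by decide : (catGraph 6).Adj (Sum.inr 3 : Fin 6 ⊕ Fin (6-2)) (Sum.inl 5 : Fin 6 ⊕ Fin (6-2))) Walk.nil))
          (by rw [SimpleGraph.Walk.isPath_def]; decide) (by rw [SimpleGraph.Walk.isPath_def]; decide)
          (by decide)
      · show (mkCat permC hcatT).Displays 0 1 4 5
        exact displays_of_catWith (mkCat permC hcatT) (mkCat_isCatWith permC hcatT) 0 1 3 5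
          (Walk.cons (by decide : (catGraph 6).Adj (Sum.inl 0 : Fin 6 ⊕ Fin (6-2)) (Sum.inr 0 : Fin 6 ⊕ Fin (6-2))) (Walk.cons (by decide : (catGraph 6).Adj (Sum.inr 0 : Fin 6 ⊕ Fin (6-2)) (Sum.inl 1 : Fin 6 ⊕ Fin (6-2))) Walk.nil))
          (Walk.cons (by decide : (catGraph 6).Adj (Sum.inl 3 : Fin 6 ⊕ Fin (6-2)) (Sum.inr 2 : Fin 6 ⊕ Fin (6-2))) (Walk.cons (by decide : (catGraph 6).Adj (Sum.inr 2 : Fin 6 ⊕ Fin (6-2)) (Sum.inr 3 : Fin 6 ⊕ Fin (6-2))) (Walk.cons (by decide : (catGraph 6).Adj (Sum.inr 3 : Fin 6 ⊕ Fin (6-2)) (Sum.inl 5 : Fin 6 ⊕ Fin (6-2))) Walk.nil)))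
          (by rw [SimpleGraph.Walk.isPath_def]; decide) (by rw [SimpleGraph.Walk.isPath_def]; decide)
          (by decide)
      · exact absurd rfl hne
    have hpiso := hu _ hdispW
    obtain ⟨ψ, hψ, hψl⟩ := no_pattern (⇑permC) (mkCat_isCatWith permC hcatT) hT hpiso
    have hex : ∃ y z : Fin 6 ⊕ Fin (6-2), (catGraph 6).Adj (Sum.inl 3) y ∧
        (catGraph 6).Adj y z ∧ (catGraph 6).Adj z (Sum.inl 5) := by decide
    obtain ⟨y, z, hy, hyz, hz⟩ := hex
    have a1 : (catGraph 6).Adj (Sum.inl (4 : Fin 6)) (ψ y) := by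
      have := (hψ _ _).mp hy
      rwa [hψl 3] at this
    have a2 : (catGraph 6).Adj (ψ y) (ψ z) := (hψ _ _).mp hyz
    have a3 : (catGraph 6).Adj (ψ z) (Sum.inl (5 : Fin 6)) := by
      have := (hψ _ _).mp hz
      rwa [hψl 5] at this
    exact absurd ⟨ψ y, ψ z, a1, a2, a3⟩
      (by decide : ¬ ∃ y z : Fin 6 ⊕ Fin (6-2), (catGraph 6).Adj (Sum.inl 4) y ∧
        (catGraph 6).Adj y z ∧ (catGraph 6).Adj z (Sum.inl 5))
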